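/- Let k be a field and A an associative k-algebra. Let Rep(A) ≤ A* be the subspace of representative functionals, i.e. those f : A → k such that the functional Δf : a ⊗ b ↦ f(ab) lies in the image of the canonical map A* ⊗ A* → (A ⊗ A)*. Then for every f ∈ Rep(A), the functional Δf lies in the image of the canonical map Rep(A) ⊗ Rep(A) → (A ⊗ A)*; that is, in a decomposition Δf = Σᵢ gᵢ ⊗ hᵢ the functionals gᵢ and hᵢ can be chosen representative. -/

import Mathlib

open TensorProduct

/-- The subspace of representative functionals on an associative `k`-algebra `A`:
those `f : A → k` such that `Δf : a ⊗ b ↦ f (a * b)` lies in the image of the canonical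
map `A* ⊗ A* → (A ⊗ A)*`. -/
noncomputable def repSubmodule (k A : Type) [Field k] [Ring A] [Algebra k A] :
    Submodule k (Module.Dual k A) :=
  Submodule.comap (LinearMap.mul' k A).dualMap
    (LinearMap.range (TensorProduct.dualDistrib k A A))


open TensorProduct

section aux
variable {k : Type} [Field k]

/-- Independent functionals admit a dual family. -/
lemma exists_dual_family {V : Type} [AddCommGroup V] [Module k V] {n : ℕ}
    (g : Fin n → Module.Dual k V) (hg : LinearIndependent k g) :
    ∃ a : Fin n → V, ∀ i j, g i (a j) = if i = j then 1 else 0 := by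
  have hsurj : Function.Surjective (LinearMap.pi g : V →ₗ[k] Fin n → k) := by
    rw [← LinearMap.range_eq_top]
    by_contra hns
    obtain ⟨φ, hφ0, hφ⟩ := Submodule.exists_dual_map_eq_bot_of_lt_top
      (lt_top_iff_ne_top.mpr hns) inferInstance
    have hz : ∀ v : V, φ (LinearMap.pi g v) = 0 := by
      intro v
      have : φ (LinearMap.pi g v) ∈ Submodule.map φ (LinearMap.range (LinearMap.pi g)) :=
        Submodule.mem_map_of_mem (LinearMap.mem_range_self _ v)
      rw [hφ] at this
      simpa using this
    have hc : ∀ i, φ (Pi.single i 1) = 0 := by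
      have := (Fintype.linearIndependent_iff.mp hg) (fun i => φ (Pi.single i 1)) ?_
      · exact this
      · ext v
        have hx : (LinearMap.pi g v : Fin n → k) = ∑ i, (g i v) • (Pi.single i 1 : Fin n → k) := by
          ext j
          simp [Pi.single_apply, LinearMap.pi_apply]
        have := hz v
        rw [hx] at this
        simp only [map_sum, map_smul] at this
        simpa [smul_eq_mul, mul_comm] using this
    apply hφ0
    apply LinearMap.ext
    intro x
    have hx : (x : Fin n → k) = ∑ i, x i • (Pi.single i 1 : Fin n → k) := by
      ext j; simp [Pi.single_apply]
    rw [hx]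
    simp [map_sum, map_smul, hc]
  refine ⟨fun j => (hsurj (Pi.single j 1)).choose, fun i j => ?_⟩
  have := (hsurj (Pi.single j 1)).choose_spec
  have := congrFun this i
  simpa [LinearMap.pi_apply, Pi.single_apply, eq_comm] using this
end aux

section aux
variable {k : Type} [Field k] {M N : Type} [AddCommGroup M] [Module k M]
  [AddCommGroup N] [Module k N]

/-- Any finite-sum tensor can be rewritten with linearly independent left components,
staying inside a submodule containing the original left components. -/
lemma exists_decomp_left {ι : Type} (s : Finset ι) (g : ι → M) (h : ι → N)
    (G₀ : Submodule k M) (hG : ∀ i ∈ s, g i ∈ G₀) :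
    ∃ (n : ℕ) (g' : Fin n → M) (h' : Fin n → N), LinearIndependent k g' ∧
      (∀ j, g' j ∈ G₀) ∧ ∑ i ∈ s, g i ⊗ₜ[k] h i = ∑ j, g' j ⊗ₜ[k] h' j := by
  classical
  set G : Submodule k M := Submodule.span k (g '' s) with hGdef
  have hfin : FiniteDimensional k G := by
    apply FiniteDimensional.span_of_finite
    exact (s.finite_toSet.image g)
  have hle : G ≤ G₀ := by
    rw [hGdef, Submodule.span_le]
    rintro x ⟨i, hi, rfl⟩
    exact hG i hi
  set n := Module.finrank k G
  set b : Module.Basis (Fin n) k G := Module.finBasis k G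
  have hmem : ∀ i ∈ s, g i ∈ G := fun i hi =>
    Submodule.subset_span ⟨i, hi, rfl⟩
  refine ⟨n, fun j => (b j : M),
    fun j => ∑ i ∈ s.attach, (b.repr ⟨g i.1, hmem i.1 i.2⟩ j) • h i.1, ?_, ?_, ?_⟩
  · exact b.linearIndependent.map' G.subtype G.ker_subtype
  · exact fun j => hle (b j).2
  · rw [← Finset.sum_attach s (fun i => g i ⊗ₜ[k] h i)]
    have hrepr : ∀ i : {x // x ∈ s}, g i.1 =
        ∑ j, (b.repr ⟨g i.1, hmem i.1 i.2⟩ j) • (b j : M) := by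
      intro i
      have := congrArg (Subtype.val) (b.sum_repr ⟨g i.1, hmem i.1 i.2⟩)
      simp only [Submodule.coe_sum, Submodule.coe_smul] at this
      exact this.symm
    calc ∑ i ∈ s.attach, g i.1 ⊗ₜ[k] h i.1
        = ∑ i ∈ s.attach, ∑ j, ((b.repr ⟨g i.1, hmem i.1 i.2⟩ j) • (b j : M)) ⊗ₜ[k] h i.1 := by
          refine Finset.sum_congr rfl fun i _ => ?_
          rw [← sum_tmul, ← hrepr]
      _ = ∑ j, ∑ i ∈ s.attach, (b j : M) ⊗ₜ[k] ((b.repr ⟨g i.1, hmem i.1 i.2⟩ j) • h i.1) := by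
          rw [Finset.sum_comm]
          refine Finset.sum_congr rfl fun j _ => Finset.sum_congr rfl fun i _ => ?_
          rw [smul_tmul]
      _ = ∑ j, (b j : M) ⊗ₜ[k] ∑ i ∈ s.attach, (b.repr ⟨g i.1, hmem i.1 i.2⟩ j) • h i.1 := by
          refine Finset.sum_congr rfl fun j _ => ?_
          rw [tmul_sum]
end aux

section aux
variable {k : Type} [Field k] {M N : Type} [AddCommGroup M] [Module k M]
  [AddCommGroup N] [Module k N]

lemma exists_decomp_right {ι : Type} (s : Finset ι) (g : ι → M) (h : ι → N)
    (G₀ : Submodule k N) (hG : ∀ i ∈ s, h i ∈ G₀) :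
    ∃ (n : ℕ) (g' : Fin n → M) (h' : Fin n → N), LinearIndependent k h' ∧
      (∀ j, h' j ∈ G₀) ∧ ∑ i ∈ s, g i ⊗ₜ[k] h i = ∑ j, g' j ⊗ₜ[k] h' j := by
  obtain ⟨n, h', g', hind, hmem, heq⟩ := exists_decomp_left s h g G₀ hG
  refine ⟨n, g', h', hind, hmem, ?_⟩
  have := congrArg (TensorProduct.comm k N M) heq
  simpa [map_sum] using this

end aux

section core
variable {k A : Type} [Field k] [Ring A] [Algebra k A]

lemma core_right {n : ℕ} (f : Module.Dual k A) (g h : Fin n → Module.Dual k A)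
    (hg : LinearIndependent k g)
    (key : ∀ x y : A, f (x * y) = ∑ i, g i x * h i y) :
    ∀ j, h j ∈ repSubmodule k A := by
  obtain ⟨a, ha⟩ := exists_dual_family g hg
  intro j
  refine Submodule.mem_comap.mpr (LinearMap.mem_range.mpr
    ⟨∑ i, (g i ∘ₗ LinearMap.mulLeft k (a j)) ⊗ₜ[k] h i, ?_⟩)
  apply TensorProduct.ext'
  intro y z
  have hL : (TensorProduct.dualDistrib k A A
      (∑ i, (g i ∘ₗ LinearMap.mulLeft k (a j)) ⊗ₜ[k] h i)) (y ⊗ₜ[k] z)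
      = ∑ i, g i (a j * y) * h i z := by
    rw [map_sum, LinearMap.sum_apply]
    exact Finset.sum_congr rfl fun i _ => by
      simp [TensorProduct.dualDistrib_apply]
  rw [hL]
  have hR : ((LinearMap.mul' k A).dualMap (h j)) (y ⊗ₜ[k] z) = h j (y * z) := by
    simp [LinearMap.dualMap_apply, LinearMap.mul'_apply]
  rw [hR]
  calc ∑ i, g i (a j * y) * h i z = f ((a j * y) * z) := (key _ _).symm
    _ = f (a j * (y * z)) := by rw [mul_assoc]
    _ = ∑ i, g i (a j) * h i (y * z) := key _ _
    _ = h j (y * z) := by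
        simp only [ha]
        simp
lemma core_left {n : ℕ} (f : Module.Dual k A) (g h : Fin n → Module.Dual k A)
    (hh : LinearIndependent k h)
    (key : ∀ x y : A, f (x * y) = ∑ i, g i x * h i y) :
    ∀ j, g j ∈ repSubmodule k A := by
  obtain ⟨b, hb⟩ := exists_dual_family h hh
  intro j
  refine Submodule.mem_comap.mpr (LinearMap.mem_range.mpr
    ⟨∑ i, g i ⊗ₜ[k] (h i ∘ₗ LinearMap.mulRight k (b j)), ?_⟩)
  apply TensorProduct.ext'
  intro y z
  have hL : (TensorProduct.dualDistrib k A A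
      (∑ i, g i ⊗ₜ[k] (h i ∘ₗ LinearMap.mulRight k (b j)))) (y ⊗ₜ[k] z)
      = ∑ i, g i y * h i (z * b j) := by
    rw [map_sum, LinearMap.sum_apply]
    exact Finset.sum_congr rfl fun i _ => by
      simp [TensorProduct.dualDistrib_apply]
  rw [hL]
  have hR : ((LinearMap.mul' k A).dualMap (g j)) (y ⊗ₜ[k] z) = g j (y * z) := by
    simp [LinearMap.dualMap_apply, LinearMap.mul'_apply]
  rw [hR]
  calc ∑ i, g i y * h i (z * b j) = f (y * (z * b j)) := (key _ _).symm
    _ = f ((y * z) * b j) := by rw [mul_assoc]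
    _ = ∑ i, g i (y * z) * h i (b j) := key _ _
    _ = g j (y * z) := by
        simp only [hb]
        simp

end core

/-- If `f` is representative, then `Δf` lies in the image of the canonical map
`Rep(A) ⊗ Rep(A) → (A ⊗ A)*` (the restriction of `A* ⊗ A* → (A ⊗ A)*` to the
subspace of representative functionals). -/
theorem statement15 (k A : Type) [Field k] [Ring A] [Algebra k A]
    (f : Module.Dual k A) (hf : f ∈ repSubmodule k A) :
    (LinearMap.mul' k A).dualMap f ∈ LinearMap.range
      (TensorProduct.dualDistrib k A A ∘ₗ
        TensorProduct.map (repSubmodule k A).subtype (repSubmodule k A).subtype) := by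
  obtain ⟨t, ht⟩ := LinearMap.mem_range.mp (Submodule.mem_comap.mp hf)
  obtain ⟨s, hs⟩ := TensorProduct.exists_finset t
  rw [hs] at ht
  -- Stage 1: right components linearly independent
  obtain ⟨n₁, g₁, h₁, hind₁, -, heq₁⟩ :=
    exists_decomp_right s Prod.fst Prod.snd (⊤ : Submodule k (Module.Dual k A))
      (fun _ _ => trivial)
  rw [heq₁] at ht
  have key₁ : ∀ x y : A, f (x * y) = ∑ i, g₁ i x * h₁ i y := by
    intro x y
    have := congrArg (fun φ : Module.Dual k (A ⊗[k] A) => φ (x ⊗ₜ[k] y)) ht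
    simp only [map_sum, LinearMap.sum_apply, TensorProduct.dualDistrib_apply,
      LinearMap.dualMap_apply, LinearMap.mul'_apply] at this
    exact this.symm
  have hg₁ : ∀ i, g₁ i ∈ repSubmodule k A := core_left f g₁ h₁ hind₁ key₁
  -- Stage 2: left components linearly independent, inside repSubmodule
  obtain ⟨n₂, g₂, h₂, hind₂, hg₂, heq₂⟩ :=
    exists_decomp_left Finset.univ g₁ h₁ (repSubmodule k A) (fun i _ => hg₁ i)
  rw [heq₂] at ht
  have key₂ : ∀ x y : A, f (x * y) = ∑ j, g₂ j x * h₂ j y := by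
    intro x y
    have := congrArg (fun φ : Module.Dual k (A ⊗[k] A) => φ (x ⊗ₜ[k] y)) ht
    simp only [map_sum, LinearMap.sum_apply, TensorProduct.dualDistrib_apply,
      LinearMap.dualMap_apply, LinearMap.mul'_apply] at this
    exact this.symm
  have hh₂ : ∀ j, h₂ j ∈ repSubmodule k A := core_right f g₂ h₂ hind₂ key₂
  refine ⟨∑ j, (⟨g₂ j, hg₂ j⟩ : repSubmodule k A) ⊗ₜ[k] (⟨h₂ j, hh₂ j⟩ : repSubmodule k A), ?_⟩
  rw [LinearMap.comp_apply, map_sum, map_sum]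
  rw [← ht, map_sum]
  exact Finset.sum_congr rfl fun j _ => by
    simp [TensorProduct.map_tmul]
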